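/- Let X, Y be Banach spaces and A = (A_{n,k}) a matrix of linear operators in L(X,Y) such that for every sequence x ∈ X^ℕ, the transforms A_n x = ∑_k A_{n,k} x_k are all norm convergent and the sequence (A_n x) is J-bounded, where J is a countably generated ideal on ℕ. Then A is row finite (each row has only finitely many nonzero entries), and there exist a set J₀ in the dual filter J* and k₁ ∈ ℕ such that A_{n,k} = 0 for all n ∈ J₀ and all k ≥ k₁. -/

import Mathlib

open Filter

/-- If `J` is countably generated and, for every `X`-valued sequence `x`, the transform
`Ax` is everywhere defined and `J`-bounded, then `A` is row finite and there are
`J₀ ∈ J*` and `k₁` such that `A n k = 0` for all `n ∈ J₀` and `k ≥ k₁`. -/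
theorem stmt10 {X Y : Type*} [NormedAddCommGroup X] [NormedSpace ℝ X] [CompleteSpace X]
    [NormedAddCommGroup Y] [NormedSpace ℝ Y] [CompleteSpace Y]
    (J : Set (Set ℕ))
    (hJ_sub : ∀ S T : Set ℕ, S ∈ J → T ⊆ S → T ∈ J)
    (hJ_union : ∀ S T : Set ℕ, S ∈ J → T ∈ J → S ∪ T ∈ J)
    (hJ_fin : ∀ S : Set ℕ, S.Finite → S ∈ J)
    (hJ_proper : Set.univ ∉ J)
    (hcg : ∃ Q : ℕ → Set ℕ, ∀ S : Set ℕ, S ∈ J ↔ ∃ F : Finset ℕ, S ⊆ ⋃ j ∈ F, Q j)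
    (A : ℕ → ℕ → X →ₗ[ℝ] Y)
    (hA : ∀ x : ℕ → X, ∃ y : ℕ → Y,
      (∀ n, Tendsto (fun m => ∑ k ∈ Finset.range m, A n k (x k)) atTop (nhds (y n))) ∧
      ∃ r : ℝ, {n | r ≤ ‖y n‖} ∈ J) :
    (∀ n, {k | A n k ≠ 0}.Finite) ∧
    ∃ J₀ : Set ℕ, J₀ᶜ ∈ J ∧ ∃ k₁ : ℕ, ∀ n ∈ J₀, ∀ k, k₁ ≤ k → A n k = 0 := by
  classical
  obtain ⟨Q, hQ⟩ := hcg
  have rowfin : ∀ n, {k | A n k ≠ 0}.Finite := by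
    intro n
    by_contra hinf
    have hinf : {k | A n k ≠ 0}.Infinite := hinf
    have exv : ∀ k, A n k ≠ 0 → ∃ v, A n k v ≠ 0 := by
      intro k h
      by_contra hc
      push_neg at hc
      exact h (LinearMap.ext fun v => by simpa using hc v)
    set x : ℕ → X := fun k =>
      if h : A n k ≠ 0 then (‖A n k (Classical.choose (exv k h))‖)⁻¹ • Classical.choose (exv k h)
      else 0 with hx
    have hxnorm : ∀ k, A n k ≠ 0 → ‖A n k (x k)‖ = 1 := by
      intro k h
      have hv := Classical.choose_spec (exv k h)
      have hne : ‖A n k (Classical.choose (exv k h))‖ ≠ 0 := norm_ne_zero_iff.mpr hv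
      simp only [hx, dif_pos h, map_smul, norm_smul, norm_inv, Real.norm_eq_abs,
        abs_of_nonneg (norm_nonneg _)]
      field_simp
    obtain ⟨y, hy, -⟩ := hA x
    have h1 := hy n
    have h2 : Tendsto (fun m => ∑ k ∈ Finset.range (m+1), A n k (x k)) atTop (nhds (y n)) :=
      h1.comp (tendsto_add_atTop_nat 1)
    have h3 : Tendsto (fun k => A n k (x k)) atTop (nhds 0) := by
      simpa [Finset.sum_range_succ] using h2.sub h1
    have h4 : ∀ᶠ k in atTop, ‖A n k (x k)‖ < 1 := by
      have := h3.norm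
      rw [norm_zero] at this
      exact this.eventually_lt_const one_pos
    obtain ⟨N, hN⟩ := eventually_atTop.mp h4
    obtain ⟨m, hm, hNm⟩ := hinf.exists_gt N
    have := hN m hNm.le
    rw [hxnorm m hm] at this
    exact lt_irrefl 1 this
  refine ⟨rowfin, ?_⟩
  by_contra hcontra
  push_neg at hcontra
  have hcon : ∀ J₀ : Set ℕ, J₀ᶜ ∈ J → ∀ k₁ : ℕ, ∃ n ∈ J₀, ∃ k, k₁ ≤ k ∧ A n k ≠ 0 := hcontra
  have key : ∀ (i : ℕ) (p : ℕ → ℕ × ℕ × X), ∃ (n k : ℕ) (v : X),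
      (∀ j < i, n ∉ Q j) ∧
      (∀ j < i, ∀ k' ≥ k, A (p j).1 k' = 0) ∧
      (∀ j < i, (p j).2.1 < k) ∧
      ((i : ℝ) + 1) ≤ ‖(∑ j ∈ Finset.range i, A n (p j).2.1 (p j).2.2) + A n k v‖ := by
    intro i p
    classical
    -- bounds for rows
    have hB : ∀ j : ℕ, ∃ b : ℕ, ∀ k', A (p j).1 k' ≠ 0 → k' ≤ b := by
      intro j
      obtain ⟨b, hb⟩ := (rowfin (p j).1).bddAbove
      exact ⟨b, fun k' hk' => hb hk'⟩
    choose B hBs using hB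
    set k₁ : ℕ := 1 + (Finset.range i).sup (fun j => max (B j) (p j).2.1) with hk₁
    set U : Set ℕ := ⋃ j ∈ Finset.range i, Q j with hU
    have hUJ : U ∈ J := (hQ U).mpr ⟨Finset.range i, subset_rfl⟩
    have hUc : Uᶜᶜ ∈ J := by rwa [compl_compl]
    obtain ⟨n, hn, k, hk, hAnk⟩ := hcon Uᶜ hUc k₁
    have hnQ : ∀ j < i, n ∉ Q j := by
      intro j hj hQj
      exact hn (Set.mem_biUnion (by simpa using hj : j ∈ (Finset.range i : Finset ℕ)) hQj)
    have hsup : ∀ j < i, max (B j) (p j).2.1 < k := by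
      intro j hj
      have : max (B j) (p j).2.1 ≤ (Finset.range i).sup (fun j => max (B j) (p j).2.1) :=
        Finset.le_sup (f := fun j => max (B j) (p j).2.1) (Finset.mem_range.mpr hj)
      omega
    have hrows : ∀ j < i, ∀ k' ≥ k, A (p j).1 k' = 0 := by
      intro j hj k' hk'
      by_contra hne
      have := hBs j k' hne
      have := hsup j hj
      omega
    have hkcol : ∀ j < i, (p j).2.1 < k := by
      intro j hj
      have := hsup j hj
      omega
    -- choose v
    obtain ⟨w, hw⟩ := DFunLike.ne_iff.mp hAnk
    simp only [LinearMap.zero_apply] at hw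
    set s : Y := ∑ j ∈ Finset.range i, A n (p j).2.1 (p j).2.2 with hs
    set c : ℝ := (i + 1 + ‖s‖) / ‖A n k w‖ with hc
    have hwn : (0:ℝ) < ‖A n k w‖ := norm_pos_iff.mpr hw
    refine ⟨n, k, c • w, hnQ, hrows, hkcol, ?_⟩
    have h1 : ‖A n k (c • w)‖ = i + 1 + ‖s‖ := by
      rw [map_smul, norm_smul, Real.norm_eq_abs, hc, abs_div, abs_of_nonneg (norm_nonneg _)]
      have hpos : (0:ℝ) ≤ i + 1 + ‖s‖ := by positivity
      rw [abs_of_nonneg hpos]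
      field_simp
    have h2 : ‖A n k (c • w)‖ - ‖s‖ ≤ ‖s + A n k (c • w)‖ := by
      have heq : ‖A n k (c • w)‖ = ‖(s + A n k (c • w)) - s‖ := by rw [add_sub_cancel_left]
      have := norm_sub_le (s + A n k (c • w)) s
      linarith [heq ▸ this]
    rw [h1] at h2
    linarith
  choose nf kf vf hc1 hc2 hc3 hc4 using key
  set P : ℕ → ℕ → ℕ × ℕ × X := fun i =>
    Nat.rec (motive := fun _ => ℕ → ℕ × ℕ × X) (fun _ => (0, 0, (0:X)))
      (fun i p j => if j = i then (nf i p, kf i p, vf i p) else p j) i with hP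
  have hPsucc : ∀ i j, P (i+1) j =
      if j = i then (nf i (P i), kf i (P i), vf i (P i)) else P i j := fun i j => rfl
  set g : ℕ → ℕ × ℕ × X := fun i => P (i+1) i with hg
  have hgdef : ∀ i, g i = (nf i (P i), kf i (P i), vf i (P i)) := by
    intro i
    rw [hg]
    simp [hPsucc]
  have hPg : ∀ i, ∀ j < i, P i j = g j := by
    intro i
    induction i with
    | zero => omega
    | succ i ih =>
      intro j hj
      rw [hPsucc]
      rcases eq_or_lt_of_le (Nat.lt_succ_iff.mp hj) with h | h
      · subst h
        rw [if_pos rfl, ← hgdef]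
      · rw [if_neg (by omega)]
        exact ih j h
  set N : ℕ → ℕ := fun i => (g i).1 with hN
  set K : ℕ → ℕ := fun i => (g i).2.1 with hK
  set V : ℕ → X := fun i => (g i).2.2 with hV
  have hNdef : ∀ i, N i = nf i (P i) := fun i => by rw [hN]; simp [hgdef]
  have hKdef : ∀ i, K i = kf i (P i) := fun i => by rw [hK]; simp [hgdef]
  have hVdef : ∀ i, V i = vf i (P i) := fun i => by rw [hV]; simp [hgdef]
  have ha : ∀ i, ∀ j < i, N i ∉ Q j := by
    intro i j hj
    rw [hNdef]
    exact hc1 i (P i) j hj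
  have hb : ∀ i, ∀ j < i, ∀ k' ≥ K i, A (N j) k' = 0 := by
    intro i j hj k' hk'
    have := hc2 i (P i) j hj k' (by rwa [hKdef] at hk')
    rwa [hPg i j hj] at this
  have hcmono : StrictMono K := by
    have h : ∀ i, ∀ j < i, K j < K i := by
      intro i j hj
      have := hc3 i (P i) j hj
      rw [hPg i j hj] at this
      rw [hKdef i]
      exact this
    exact fun j i hji => h i j hji
  have hd : ∀ i : ℕ, ((i : ℝ) + 1) ≤ ‖∑ j ∈ Finset.range (i+1), A (N i) (K j) (V j)‖ := by
    intro i
    have := hc4 i (P i)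
    rw [Finset.sum_range_succ]
    have hsum : ∑ j ∈ Finset.range i, A (nf i (P i)) ((P i j).2.1) ((P i j).2.2)
        = ∑ j ∈ Finset.range i, A (N i) (K j) (V j) := by
      refine Finset.sum_congr rfl fun j hj => ?_
      rw [hPg i j (Finset.mem_range.mp hj), hNdef]
    rw [hsum, ← hNdef, ← hKdef, ← hVdef] at this
    exact this
  -- define x
  set x : ℕ → X := fun k => if h : ∃ i, K i = k then V (Classical.choose h) else 0 with hx
  have hxK : ∀ i, x (K i) = V i := by
    intro i
    have hex : ∃ i', K i' = K i := ⟨i, rfl⟩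
    rw [hx]
    simp only [dif_pos hex]
    have := Classical.choose_spec hex
    rw [hcmono.injective this]
  have hx0 : ∀ k, (∀ i, K i ≠ k) → x k = 0 := by
    intro k hk
    rw [hx]
    exact dif_neg (by push_neg; exact hk)
  obtain ⟨y, hy, r, hr⟩ := hA x
  have ynorm : ∀ i : ℕ, ((i : ℝ) + 1) ≤ ‖y (N i)‖ := by
    intro i
    set S : Y := ∑ j ∈ Finset.range (i+1), A (N i) (K j) (V j) with hS
    have hconst : ∀ m, K i < m → ∑ k ∈ Finset.range m, A (N i) k (x k) = S := by
      intro m hm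
      have hsub : (Finset.range (i+1)).image K ⊆ Finset.range m := by
        intro k hk
        obtain ⟨j, hj, rfl⟩ := Finset.mem_image.mp hk
        have : K j ≤ K i := hcmono.monotone (Nat.lt_succ_iff.mp (Finset.mem_range.mp hj))
        exact Finset.mem_range.mpr (by omega)
      have hzero : ∀ k ∈ Finset.range m, k ∉ (Finset.range (i+1)).image K →
          A (N i) k (x k) = 0 := by
        intro k _ hk
        by_cases hex : ∃ j, K j = k
        · obtain ⟨j, rfl⟩ := hex
          have hij : i < j := by
            by_contra hji
            exact hk (Finset.mem_image.mpr ⟨j, Finset.mem_range.mpr (by omega), rfl⟩)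
          rw [hb j i hij (K j) le_rfl]
          simp
        · rw [hx0 k (fun i hi => hex ⟨i, hi⟩)]
          simp
      rw [← Finset.sum_subset hsub hzero,
        Finset.sum_image (fun a _ b _ h => hcmono.injective h)]
      exact Finset.sum_congr rfl fun j _ => by rw [hxK]
    have hev : (fun m => ∑ k ∈ Finset.range m, A (N i) k (x k)) =ᶠ[atTop] fun _ => S :=
      eventually_atTop.mpr ⟨K i + 1, fun m hm => hconst m (by omega)⟩
    have hlim : Tendsto (fun m => ∑ k ∈ Finset.range m, A (N i) k (x k)) atTop (nhds S) :=
      Tendsto.congr' hev.symm tendsto_const_nhds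
    have : y (N i) = S := tendsto_nhds_unique (hy (N i)) hlim
    rw [this]
    exact hd i
  -- final contradiction
  obtain ⟨F, hF⟩ := (hQ _).mp hr
  obtain ⟨N₀, hN₀⟩ := exists_nat_ge r
  set i : ℕ := N₀ + F.sup id + 1 with hi
  have hri : r ≤ ‖y (N i)‖ := by
    have h1 : (N₀ : ℝ) ≤ (i : ℝ) + 1 := by
      have : N₀ ≤ i + 1 := by omega
      exact_mod_cast this
    linarith [ynorm i]
  have hmem : N i ∈ ⋃ j ∈ F, Q j := hF hri
  obtain ⟨j, hjF, hjQ⟩ := Set.mem_iUnion₂.mp hmem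
  have hji : j < i := by
    have : j ≤ F.sup id := Finset.le_sup (f := id) hjF
    omega
  exact ha i j hji hjQ
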